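/- As subsets of t, the set {x ∈ t : ⟨x, y⟩ ∈ ℤ for every y ∈ t with F(y) ∈ Λ̂} is equal to F(Λ). -/

import Mathlib

open scoped RealInnerProductSpace

/-- With `Λ̂ = {x : ⟪x, λ⟫ ∈ ℤ for all λ ∈ Λ}` the dual lattice, the set
`{x ∈ t : ⟪x, y⟫ ∈ ℤ for every y ∈ t with F y ∈ Λ̂}` is equal to `F(Λ)`. -/
theorem stmt_4 {t : Type*} [NormedAddCommGroup t] [InnerProductSpace ℝ t]
    [FiniteDimensional ℝ t]
    (Λ : Submodule ℤ t) [DiscreteTopology Λ]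
    (hspan : Submodule.span ℝ (Λ : Set t) = ⊤)
    (L : t ≃ₗᵢ[ℝ] t) (hL : ⇑L '' (Λ : Set t) = (Λ : Set t))
    (F : t →ₗ[ℝ] t) (hF : ∀ x, F x = L x - x)
    (Λhat : Set t) (hΛhat : Λhat = {x : t | ∀ l ∈ Λ, ∃ n : ℤ, ⟪x, l⟫ = (n : ℝ)}) :
    {x : t | ∀ y : t, F y ∈ Λhat → ∃ n : ℤ, ⟪x, y⟫ = (n : ℝ)} = ⇑F '' (Λ : Set t) := by
  classical
  subst hΛhat
  set D : Set t := {x : t | ∀ l ∈ Λ, ∃ n : ℤ, ⟪x, l⟫ = (n : ℝ)} with hD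
  -- Basic membership facts about Λ
  have hLmem : ∀ l ∈ Λ, L l ∈ Λ := by
    intro l hl
    have : L l ∈ (Λ : Set t) := by rw [← hL]; exact ⟨l, hl, rfl⟩
    exact this
  have hLsymmmem : ∀ l ∈ Λ, L.symm l ∈ Λ := by
    intro l hl
    have hl' : l ∈ ⇑L '' (Λ : Set t) := by rw [hL]; exact hl
    obtain ⟨m, hm, rfl⟩ := hl'
    simpa using hm
  -- inner product identities
  have hinner1 : ∀ a b : t, ⟪L a, b⟫ = ⟪a, L.symm b⟫ := by
    intro a b
    have := L.inner_map_map a (L.symm b)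
    rwa [L.apply_symm_apply] at this
  have hinner2 : ∀ a b : t, ⟪L.symm a, b⟫ = ⟪a, L b⟫ := by
    intro a b
    have := L.symm.inner_map_map a (L b)
    rwa [L.symm_apply_apply] at this
  -- the adjoint of F
  set G : t →ₗ[ℝ] t := (L.symm.toLinearEquiv : t →ₗ[ℝ] t) - LinearMap.id with hGdef
  have hG : ∀ y, G y = L.symm y - y := by intro y; simp [hGdef]
  have hFadj : ∀ a b : t, ⟪F a, b⟫ = ⟪a, G b⟫ := by
    intro a b
    rw [hF, hG, inner_sub_left, inner_sub_right, hinner1]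
  have hGF : ∀ w, G w = -(L.symm (F w)) := by
    intro w
    rw [hG, hF, map_sub, L.symm_apply_apply]
    abel
  have hFG : ∀ w, F w = -(L (G w)) := by
    intro w
    rw [hG, hF, map_sub, L.apply_symm_apply]
    abel
  -- stability of D
  have hD0 : (0 : t) ∈ D := fun l _ => ⟨0, by simp⟩
  have hDneg : ∀ u ∈ D, -u ∈ D := by
    intro u hu l hl
    obtain ⟨n, hn⟩ := hu l hl
    exact ⟨-n, by rw [inner_neg_left, hn]; push_cast; ring⟩
  have hDL : ∀ u ∈ D, L u ∈ D := by
    intro u hu l hl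
    obtain ⟨n, hn⟩ := hu (L.symm l) (hLsymmmem l hl)
    exact ⟨n, by rw [hinner1]; exact hn⟩
  have hDLsymm : ∀ u ∈ D, L.symm u ∈ D := by
    intro u hu l hl
    obtain ⟨n, hn⟩ := hu (L l) (hLmem l hl)
    exact ⟨n, by rw [hinner2]; exact hn⟩
  -- key characterization
  have key : ∀ w, F w ∈ D ↔ ∀ l ∈ Λ, ∃ n : ℤ, ⟪w, F l⟫ = (n : ℝ) := by
    intro w
    have hswap : ∀ l : t, ⟪w, F l⟫ = ⟪G w, l⟫ := by
      intro l
      rw [real_inner_comm, hFadj, real_inner_comm]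
    constructor
    · intro hw l hl
      have hGw : G w ∈ D := by
        rw [hGF]
        exact hDneg _ (hDLsymm _ hw)
      obtain ⟨n, hn⟩ := hGw l hl
      exact ⟨n, by rw [hswap]; exact hn⟩
    · intro h
      have hGw : G w ∈ D := by
        intro l hl
        obtain ⟨n, hn⟩ := h l hl
        exact ⟨n, by rw [← hswap]; exact hn⟩
      rw [hFG]
      exact hDneg _ (hDL _ hGw)
  -- the range of F
  set V : Submodule ℝ t := LinearMap.range F with hVdef
  have hGzero : ∀ z, G z = 0 ↔ F z = 0 := by
    intro z
    rw [hGF, neg_eq_zero, L.symm.map_eq_zero_iff]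
  have hVorth : Vᗮ = LinearMap.ker F := by
    ext z
    rw [Submodule.mem_orthogonal, LinearMap.mem_ker]
    constructor
    · intro h
      have h' : ⟪G z, G z⟫ = 0 := by
        have := h (F (G z)) ⟨G z, rfl⟩
        rwa [hFadj] at this
      have h'' : G z = 0 := inner_self_eq_zero.mp h'
      exact (hGzero z).mp h''
    · intro h u hu
      obtain ⟨a, rfl⟩ := hu
      rw [hFadj]
      have : G z = 0 := (hGzero z).mpr h
      rw [this, inner_zero_right]
  -- the lattice F(Λ) inside t
  set NT : Submodule ℤ t := Λ.map (F.restrictScalars ℤ) with hNTdef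
  have hNTle : (NT : Set t) ⊆ (Λ : Set t) := by
    rintro x hx
    obtain ⟨l, hl, rfl⟩ := hx
    have : F l = L l - l := hF l
    simpa [this] using sub_mem (hLmem l hl) hl
  have hNTdisc : DiscreteTopology NT :=
    DiscreteTopology.of_subset (inferInstance : DiscreteTopology Λ) hNTle
  have hNTrange : NT ≤ LinearMap.range (V.subtype.restrictScalars ℤ) := by
    rintro x hx
    obtain ⟨l, _, rfl⟩ := hx
    exact ⟨⟨F l, ⟨l, rfl⟩⟩, rfl⟩
  -- the lattice F(Λ) as a submodule of V
  set N : Submodule ℤ V := NT.comap (V.subtype.restrictScalars ℤ) with hNdef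
  have hNimg : ⇑V.subtype '' (N : Set V) = (NT : Set t) := by
    rw [← LinearMap.coe_restrictScalars ℤ V.subtype, ← Submodule.map_coe,
      Submodule.map_comap_eq_self hNTrange]
  have hNdisc : DiscreteTopology N := by
    have := hNTdisc
    exact DiscreteTopology.preimage_of_continuous_injective (NT : Set t)
      (LinearMap.continuous_of_finiteDimensional V.subtype) (Submodule.injective_subtype V)
  have hNTspan : Submodule.span ℝ (NT : Set t) = V := by
    have h1 : (NT : Set t) = ⇑F '' (Λ : Set t) := by
      rw [hNTdef, Submodule.map_coe]
      rfl
    rw [h1, ← Submodule.map_span, hspan, Submodule.map_top]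
  have hNZL : IsZLattice ℝ N := by
    refine ⟨?_⟩
    apply Submodule.map_injective_of_injective (Submodule.injective_subtype V)
    rw [Submodule.map_span, hNimg, hNTspan, Submodule.map_top, Submodule.range_subtype]
  -- the bilinear form on V
  set B : LinearMap.BilinForm ℝ V := innerₗ V with hBdef
  have hBapp : ∀ a b : V, B a b = ⟪a, b⟫ := by
    intro a b; simp [hBdef, real_inner_comm]
  have hBnd : B.Nondegenerate := by
    refine ⟨?_, ?_⟩ <;>
    intro a ha <;>
    have := ha a <;>
    rw [hBapp] at this <;>
    exact inner_self_eq_zero.mp this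
  -- double duality
  haveI : ProperSpace (↥V) := FiniteDimensional.proper ℝ ↥V
  have : Module.Finite ℤ N := ZLattice.module_finite ℝ N
  have : Module.Free ℤ N := ZLattice.module_free ℝ N
  set b : Module.Basis (Module.Free.ChooseBasisIndex ℤ N) ℤ N := Module.Free.chooseBasis ℤ N with hb
  have hdd : B.dualSubmodule (B.flip.dualSubmodule N) = N := by
    have h1 := B.dualSubmodule_dualSubmodule_flip_of_basis (R := ℤ) hBnd (Module.Basis.ofZLatticeBasis ℝ N b)
    rwa [Module.Basis.ofZLatticeBasis_span] at h1
  -- main proof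
  ext x
  constructor
  · intro hx
    -- x is orthogonal to the kernel of F
    have hperp : ∀ y, F y = 0 → ⟪y, x⟫ = 0 := by
      intro y hy
      rw [real_inner_comm]
      by_contra h
      set a := ⟪x, y⟫ with ha
      obtain ⟨n, hn⟩ := hx ((a⁻¹ * (1 / 2)) • y)
        (by rw [map_smul, hy, smul_zero]; exact hD0)
      rw [real_inner_smul_right, ← ha] at hn
      have hval : a⁻¹ * (1 / 2) * a = 1 / 2 := by
        field_simp
      rw [hval] at hn
      have h3 : (2 * n : ℤ) = 1 := by
        have h2 : ((2 * n : ℤ) : ℝ) = 1 := by push_cast; linarith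
        exact_mod_cast h2
      omega
    have hxV : x ∈ V := by
      have h1 : x ∈ (LinearMap.ker F)ᗮ := by
        rw [Submodule.mem_orthogonal]
        intro u hu
        exact hperp u hu
      rwa [← hVorth, Submodule.orthogonal_orthogonal] at h1
    set xV : V := ⟨x, hxV⟩ with hxVdef
    have hxN : xV ∈ N := by
      rw [← hdd]
      intro w hw
      rw [Submodule.mem_one]
      have hFwD : F (w : t) ∈ D := by
        rw [key]
        intro l hl
        have hFlV : F l ∈ V := ⟨l, rfl⟩
        have hFlN : (⟨F l, hFlV⟩ : V) ∈ N := by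
          show F l ∈ NT
          exact ⟨l, hl, rfl⟩
        have := hw ⟨F l, hFlV⟩ hFlN
        rw [Submodule.mem_one] at this
        obtain ⟨m, hm⟩ := this
        refine ⟨m, ?_⟩
        rw [real_inner_comm]
        have : B.flip w ⟨F l, hFlV⟩ = ⟪F l, (w : t)⟫ := by
          rw [LinearMap.BilinForm.flip_apply, hBapp, Submodule.coe_inner]
        rw [← this, ← hm]
        simp
      obtain ⟨n, hn⟩ := hx (w : t) hFwD
      refine ⟨n, ?_⟩
      rw [hBapp, Submodule.coe_inner]
      simp [hxVdef, hn]
    have : x ∈ NT := hxN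
    obtain ⟨l, hl, hlx⟩ := this
    exact ⟨l, hl, hlx⟩
  · rintro ⟨l, hl, rfl⟩
    intro y hy
    have hGy : G y ∈ D := by
      rw [hGF]
      exact hDneg _ (hDLsymm _ hy)
    obtain ⟨n, hn⟩ := hGy l hl
    refine ⟨n, ?_⟩
    rw [hFadj l y, real_inner_comm]
    exact hn
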